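/- Fix k > 0 and a sequence (k'_n)_{n∈ℕ} of nonnegative reals, and set ν_n := k'_n + k(n−1) + 1/2. Let (λ(n))_{n∈ℕ} be a sequence with λ(n) ∈ ℝ^n satisfying λ(n)_1 ≥ λ(n)_2 ≥ … ≥ λ(n)_n ≥ 0, and let μ(n) ∈ ℝ^n denote the tuple with entries μ(n)_i = λ(n)_i²/ν_n. Then (μ(n))_{n∈ℕ} is a Vershik–Kerov sequence if and only if for every integer m ≥ 1 the limit lim_{n→∞} p_m(λ(n)²)/(n ν_n)^m exists in ℝ, where λ(n)² denotes the tuple of squares (λ(n)_1², …, λ(n)_n²). -/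
import Mathlib

open Filter Topology

/-- `ν_n = k'_n + k(n-1) + 1/2`. -/
noncomputable def nuB (k : ℝ) (k' : ℕ → ℝ) (n : ℕ) : ℝ := k' n + k * ((n : ℝ) - 1) + 1 / 2

/-- Numeric lemma: two-sided power inequalities force equality. -/
lemma vkB_pow_eq {C : ℝ} (hC : 0 ≤ C) :
    ∀ a b : ℝ, 0 ≤ a → 0 ≤ b →
      (∀ m : ℕ, 3 ≤ m → a ^ m ≤ b ^ (m - 2) * C) →
      (∀ m : ℕ, 3 ≤ m → b ^ m ≤ a ^ (m - 2) * C) → a = b := by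
  have key : ∀ a b : ℝ, 0 ≤ a → 0 ≤ b →
      (∀ m : ℕ, 3 ≤ m → a ^ m ≤ b ^ (m - 2) * C) → a ≤ b := by
    intro a b ha hb h1
    by_contra hab
    push_neg at hab
    rcases eq_or_lt_of_le hb with hb0 | hb0
    · have h3 := h1 3 le_rfl
      rw [← hb0] at h3
      norm_num at h3
      have : (0:ℝ) < a ^ 3 := pow_pos (lt_of_le_of_lt hb (hb0 ▸ hab)) 3
      linarith
    · have hq : 1 < a / b := (one_lt_div hb0).2 hab
      obtain ⟨m, hmgt, hm3⟩ :=
        (((tendsto_pow_atTop_atTop_of_one_lt hq).eventually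
          (eventually_gt_atTop (C / b ^ 2))).and (eventually_ge_atTop 3)).exists
      have hbm : (0:ℝ) < b ^ m := pow_pos hb0 m
      have h1m := h1 m hm3
      have hsplit : b ^ (m - 2) * b ^ 2 = b ^ m := by
        rw [← pow_add]; congr 1; omega
      have hle : a ^ m / b ^ m ≤ C / b ^ 2 := by
        rw [div_le_div_iff₀ hbm (by positivity)]
        calc a ^ m * b ^ 2 ≤ b ^ (m - 2) * C * b ^ 2 := by
              exact mul_le_mul_of_nonneg_right h1m (by positivity)
          _ = C * (b ^ (m - 2) * b ^ 2) := by ring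
          _ = C * b ^ m := by rw [hsplit]
          _ = C * b ^ m := rfl
      rw [div_pow] at hmgt
      linarith
  intro a b ha hb h1 h2
  exact le_antisymm (key a b ha hb h1) (key b a hb ha h2)

/-- Convergence of a nonnegative sequence controlled by tail power sums. -/
lemma vkB_lemA (y : ℕ → ℝ) (T : ℕ → ℕ → ℝ)
    (hy : ∀ n, 0 ≤ y n)
    (hL : ∀ m : ℕ, 2 ≤ m → ∃ L, Tendsto (T m) atTop (𝓝 L))
    (hlow : ∀ m n, 2 ≤ m → y n ^ m ≤ T m n)
    (hup : ∀ m n, 2 ≤ m → T m n ≤ y n ^ (m - 2) * T 2 n) :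
    ∃ l, Tendsto y atTop (𝓝 l) := by
  obtain ⟨L2, hL2⟩ := hL 2 le_rfl
  obtain ⟨M, hM⟩ := hL2.bddAbove_range
  have hMb : ∀ n, T 2 n ≤ M := fun n => hM (Set.mem_range_self n)
  have hmem : ∀ n, y n ∈ Set.Icc (0:ℝ) (Real.sqrt M) := fun n =>
    ⟨hy n, Real.le_sqrt_of_sq_le ((hlow 2 n le_rfl).trans (hMb n))⟩
  have hL2nn : 0 ≤ L2 :=
    le_of_tendsto_of_tendsto' tendsto_const_nhds hL2
      (fun n => le_trans (pow_nonneg (hy n) 2) (hlow 2 n le_rfl))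
  have ineq : ∀ (u v : ℕ → ℕ), Tendsto u atTop atTop → Tendsto v atTop atTop →
      ∀ {c d : ℝ}, Tendsto (fun j => y (u j)) atTop (𝓝 c) →
        Tendsto (fun j => y (v j)) atTop (𝓝 d) →
      ∀ m : ℕ, 3 ≤ m → c ^ m ≤ d ^ (m - 2) * L2 := by
    intro u v hu hv c d hc hd m hm
    obtain ⟨Lm, hLm⟩ := hL m (by omega)
    have h1 : c ^ m ≤ Lm :=
      le_of_tendsto_of_tendsto' (hc.pow m) (hLm.comp hu)
        (fun j => hlow m (u j) (by omega))
    have h2 : Lm ≤ d ^ (m - 2) * L2 :=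
      le_of_tendsto_of_tendsto' (hLm.comp hv) ((hd.pow (m - 2)).mul (hL2.comp hv))
        (fun j => hup m (v j) (by omega))
    exact h1.trans h2
  obtain ⟨a, -, φ, hφ, hyφ⟩ := tendsto_subseq_of_bounded (Metric.isBounded_Icc (0:ℝ) (Real.sqrt M)) hmem
  have ha0 : 0 ≤ a :=
    le_of_tendsto_of_tendsto' tendsto_const_nhds hyφ (fun j => hy _)
  refine ⟨a, tendsto_of_subseq_tendsto ?_⟩
  intro ns hns
  obtain ⟨b, -, ψ, hψ, hyψ⟩ :=
    tendsto_subseq_of_bounded (Metric.isBounded_Icc (0:ℝ) (Real.sqrt M)) (x := fun j => y (ns j)) (fun j => hmem (ns j))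
  have hb0 : 0 ≤ b :=
    le_of_tendsto_of_tendsto' tendsto_const_nhds hyψ (fun j => hy _)
  have hφt : Tendsto φ atTop atTop := hφ.tendsto_atTop
  have hψt : Tendsto (fun j => ns (ψ j)) atTop atTop := hns.comp hψ.tendsto_atTop
  have hba : b = a :=
    vkB_pow_eq hL2nn b a hb0 ha0 (ineq _ _ hψt hφt hyψ hyφ) (ineq _ _ hφt hψt hyφ hyψ)
  exact ⟨ψ, hba ▸ hyψ⟩

/-- Existence of the `α i` limits from convergence of all power sums. -/
lemma vkB_alpha (x : ℕ → ℕ → ℝ) (hx0 : ∀ n i, 0 ≤ x n i)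
    (hanti : ∀ n, Antitone (x n)) (hpad : ∀ n i, n ≤ i → x n i = 0)
    (hS : ∀ m : ℕ, 1 ≤ m →
      ∃ L, Tendsto (fun n => ∑ j ∈ Finset.range n, x n j ^ m) atTop (𝓝 L)) :
    ∀ i, ∃ l, Tendsto (fun n => x n i) atTop (𝓝 l) := by
  intro i
  induction i using Nat.strong_induction_on with
  | _ i IH =>
  have hαex : ∀ j : ℕ, ∃ l, (j < i → Tendsto (fun n => x n j) atTop (𝓝 l)) := by
    intro j
    by_cases h : j < i
    · exact (IH j h).imp (fun l hl _ => hl)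
    · exact ⟨0, fun hj => absurd hj h⟩
  choose α hα using hαex
  set T : ℕ → ℕ → ℝ := fun m n => ∑ j ∈ Finset.Ico i n, x n j ^ m with hT
  refine vkB_lemA (fun n => x n i) T (fun n => hx0 n i) ?_ ?_ ?_
  · intro m hm
    obtain ⟨Lm, hLm⟩ := hS m (by omega)
    have hsub : Tendsto (fun n => ∑ j ∈ Finset.range i, x n j ^ m) atTop
        (𝓝 (∑ j ∈ Finset.range i, α j ^ m)) :=
      tendsto_finset_sum _ (fun j hj => (hα j (Finset.mem_range.1 hj)).pow m)
    refine ⟨Lm - ∑ j ∈ Finset.range i, α j ^ m, Tendsto.congr' ?_ (hLm.sub hsub)⟩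
    filter_upwards [eventually_ge_atTop i] with n hn
    have hsplit : ∑ j ∈ Finset.Ico 0 i, x n j ^ m + ∑ j ∈ Finset.Ico i n, x n j ^ m
        = ∑ j ∈ Finset.Ico 0 n, x n j ^ m :=
      Finset.sum_Ico_consecutive _ (Nat.zero_le i) hn
    simp only [← Finset.range_eq_Ico] at hsplit
    simp only [hT]
    linarith
  · intro m n hm
    show x n i ^ m ≤ T m n
    rcases lt_or_ge i n with h | h
    · exact Finset.single_le_sum (f := fun j => x n j ^ m)
        (fun j _ => pow_nonneg (hx0 n j) m) (Finset.mem_Ico.2 ⟨le_rfl, h⟩)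
    · rw [hpad n i h, zero_pow (by omega)]
      exact Finset.sum_nonneg (fun j _ => pow_nonneg (hx0 n j) m)
  · intro m n hm
    calc T m n = ∑ j ∈ Finset.Ico i n, x n j ^ (m - 2) * x n j ^ 2 := by
          refine Finset.sum_congr rfl (fun j hj => ?_)
          rw [← pow_add]
          congr 1
          omega
      _ ≤ ∑ j ∈ Finset.Ico i n, x n i ^ (m - 2) * x n j ^ 2 :=
          Finset.sum_le_sum (fun j hj => mul_le_mul_of_nonneg_right
            (pow_le_pow_left₀ (hx0 n j) (hanti n (Finset.mem_Ico.1 hj).1) (m - 2))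
            (sq_nonneg _))
      _ = x n i ^ (m - 2) * T 2 n := by rw [hT, Finset.mul_sum]

/-- Convergence of higher power sums from the VK data. -/
lemma vkB_higher (x : ℕ → ℕ → ℝ) (hx0 : ∀ n i, 0 ≤ x n i)
    (hanti : ∀ n, Antitone (x n)) (hpad : ∀ n i, n ≤ i → x n i = 0)
    (α : ℕ → ℝ) (hα : ∀ i, Tendsto (fun n => x n i) atTop (𝓝 (α i)))
    {δ : ℝ} (hδ : Tendsto (fun n => ∑ j ∈ Finset.range n, x n j ^ 2) atTop (𝓝 δ))
    (m : ℕ) (hm : 3 ≤ m) :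
    ∃ L, Tendsto (fun n => ∑ j ∈ Finset.range n, x n j ^ m) atTop (𝓝 L) := by
  obtain ⟨M, hM⟩ := hδ.bddAbove_range
  have hMb : ∀ n, ∑ j ∈ Finset.range n, x n j ^ 2 ≤ M :=
    fun n => hM (Set.mem_range_self n)
  have hM0 : (0:ℝ) ≤ M := le_trans (by simp) (hMb 0)
  have key : ∀ n i : ℕ, x n i ^ 2 * ((i:ℝ) + 1) ≤ M := by
    intro n i
    rcases le_or_gt n i with h | h
    · rw [hpad n i h]
      simpa using hM0
    · have h1 : ((i:ℕ) + 1) • (x n i ^ 2) ≤ ∑ j ∈ Finset.range (i + 1), x n j ^ 2 := by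
        have := Finset.card_nsmul_le_sum (Finset.range (i + 1))
          (fun j => x n j ^ 2) (x n i ^ 2)
          (fun j hj => pow_le_pow_left₀ (hx0 n i)
            (hanti n (by simpa using Nat.lt_succ_iff.1 (Finset.mem_range.1 hj))) 2)
        simpa [Finset.card_range] using this
      have h2 : ∑ j ∈ Finset.range (i + 1), x n j ^ 2 ≤ ∑ j ∈ Finset.range n, x n j ^ 2 :=
        Finset.sum_le_sum_of_subset_of_nonneg (Finset.range_subset_range.2 h)
          (fun j _ _ => sq_nonneg _)
      have h1' : ((i:ℝ) + 1) * x n i ^ 2 ≤ ∑ j ∈ Finset.range (i + 1), x n j ^ 2 := by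
        have := h1
        rw [nsmul_eq_mul] at this
        push_cast at this ⊢
        linarith
      nlinarith [hMb n]
  have hxb : ∀ n i : ℕ, x n i ≤ Real.sqrt M * ((i:ℝ) + 1) ^ (-(1/2) : ℝ) := by
    intro n i
    have hi1 : (0:ℝ) < (i:ℝ) + 1 := by positivity
    have h1 : x n i ^ 2 ≤ M / ((i:ℝ) + 1) := (le_div_iff₀ hi1).2 (key n i)
    calc x n i ≤ Real.sqrt (M / ((i:ℝ) + 1)) := Real.le_sqrt_of_sq_le h1
      _ = Real.sqrt M * ((i:ℝ) + 1) ^ (-(1/2) : ℝ) := by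
          rw [Real.sqrt_div hM0, div_eq_mul_inv]
          congr 1
          rw [Real.sqrt_eq_rpow, ← Real.rpow_neg hi1.le]
  have hB0 : (0:ℝ) ≤ Real.sqrt M := Real.sqrt_nonneg M
  have hgb : ∀ n i : ℕ, ‖x n i ^ m‖ ≤ Real.sqrt M ^ m * ((i:ℝ) + 1) ^ (-(3/2) : ℝ) := by
    intro n i
    have hi1 : (0:ℝ) ≤ (i:ℝ) + 1 := by positivity
    rw [Real.norm_eq_abs, abs_of_nonneg (pow_nonneg (hx0 n i) m)]
    have h2 : (((i:ℝ) + 1) ^ (-(1/2) : ℝ)) ^ m = ((i:ℝ) + 1) ^ (-(1/2) * m : ℝ) := by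
      rw [← Real.rpow_natCast (((i:ℝ) + 1) ^ (-(1/2) : ℝ)) m, ← Real.rpow_mul hi1]
    have h3 : ((i:ℝ) + 1) ^ (-(1/2) * m : ℝ) ≤ ((i:ℝ) + 1) ^ (-(3/2) : ℝ) := by
      apply Real.rpow_le_rpow_of_exponent_le (by linarith [Nat.cast_nonneg (α := ℝ) i])
      have h4 : (3:ℝ) ≤ (m:ℝ) := by exact_mod_cast hm
      linarith
    calc x n i ^ m ≤ (Real.sqrt M * ((i:ℝ) + 1) ^ (-(1/2) : ℝ)) ^ m :=
          pow_le_pow_left₀ (hx0 n i) (hxb n i) m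
      _ = Real.sqrt M ^ m * (((i:ℝ) + 1) ^ (-(1/2) : ℝ)) ^ m := mul_pow _ _ _
      _ = Real.sqrt M ^ m * ((i:ℝ) + 1) ^ (-(1/2) * m : ℝ) := by rw [h2]
      _ ≤ Real.sqrt M ^ m * ((i:ℝ) + 1) ^ (-(3/2) : ℝ) :=
          mul_le_mul_of_nonneg_left h3 (pow_nonneg hB0 m)
  have hsum : Summable (fun i : ℕ => Real.sqrt M ^ m * ((i:ℝ) + 1) ^ (-(3/2) : ℝ)) := by
    apply Summable.mul_left
    have h0 : Summable (fun n : ℕ => (n:ℝ) ^ (-(3/2) : ℝ)) :=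
      Real.summable_nat_rpow.mpr (by norm_num)
    refine ((_root_.summable_nat_add_iff 1).mpr h0).congr (fun i => ?_)
    push_cast
    ring_nf
  refine ⟨∑' i, α i ^ m, ?_⟩
  have hdct := tendsto_tsum_of_dominated_convergence (f := fun n i => x n i ^ m) hsum
    (fun i => (hα i).pow m) (Eventually.of_forall (fun n => fun i => hgb n i))
  refine hdct.congr (fun n => ?_)
  refine tsum_eq_sum (fun i hi => ?_)
  have h0 := hpad n i (by simpa using hi)
  simp [h0, zero_pow (show m ≠ 0 by omega)]

/-- Abstract form of the equivalence. -/
lemma vkB_main (x : ℕ → ℕ → ℝ) (hx0 : ∀ n i, 0 ≤ x n i)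
    (hanti : ∀ n, Antitone (x n)) (hpad : ∀ n i, n ≤ i → x n i = 0) :
    ((∃ α : ℕ → ℝ, ∀ i, Tendsto (fun n => x n i) atTop (𝓝 (α i))) ∧
     (∃ β : ℝ, Tendsto (fun n => ∑ j ∈ Finset.range n, x n j ^ 1) atTop (𝓝 β)) ∧
     (∃ δ : ℝ, Tendsto (fun n => ∑ j ∈ Finset.range n, x n j ^ 2) atTop (𝓝 δ)))
    ↔ ∀ m : ℕ, 1 ≤ m →
      ∃ L, Tendsto (fun n => ∑ j ∈ Finset.range n, x n j ^ m) atTop (𝓝 L) := by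
  constructor
  · rintro ⟨⟨α, hα⟩, ⟨β, hβ⟩, ⟨δ, hδ⟩⟩ m hm
    match m, hm with
    | 1, _ => exact ⟨β, hβ⟩
    | 2, _ => exact ⟨δ, hδ⟩
    | (m + 3), _ => exact vkB_higher x hx0 hanti hpad α hα hδ (m + 3) (by omega)
  · intro h
    refine ⟨?_, h 1 le_rfl, h 2 (by omega)⟩
    choose α hα using vkB_alpha x hx0 hanti hpad h
    exact ⟨α, hα⟩

/-- For `λ(n) ∈ ℝ^n` with `λ(n)_1 ≥ … ≥ λ(n)_n ≥ 0` and
`μ(n)_i = λ(n)_i²/ν_n`, the sequence `(μ(n))` is Vershik–Kerov if and only if for every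
`m ≥ 1` the limit `lim_n p_m(λ(n)²)/(nν_n)^m` exists. -/
theorem vk_B_iff_power_sum_limits (k : ℝ) (hk : 0 < k)
    (k' : ℕ → ℝ) (hk' : ∀ n, 0 ≤ k' n)
    (Λ : ℕ → ℕ → ℝ)
    (hpad : ∀ n i, n ≤ i → Λ n i = 0)
    (hmono : ∀ n i, i + 1 < n → Λ n (i + 1) ≤ Λ n i)
    (hpos : ∀ n i, 0 ≤ Λ n i) :
    ((∃ α : ℕ → ℝ, ∀ i, Tendsto
        (fun n : ℕ => ((Λ n i) ^ 2 / nuB k k' n) / (n : ℝ)) atTop (𝓝 (α i))) ∧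
     (∃ β : ℝ, Tendsto
        (fun n : ℕ => (∑ i ∈ Finset.range n, (Λ n i) ^ 2 / nuB k k' n) / (n : ℝ))
        atTop (𝓝 β)) ∧
     (∃ δ : ℝ, Tendsto
        (fun n : ℕ => (∑ i ∈ Finset.range n, ((Λ n i) ^ 2 / nuB k k' n) ^ 2) / (n : ℝ) ^ 2)
        atTop (𝓝 δ)))
    ↔ (∀ m : ℕ, 1 ≤ m →
        ∃ L : ℝ, Tendsto
          (fun n : ℕ => (∑ i ∈ Finset.range n, (Λ n i) ^ (2 * m)) / ((n : ℝ) * nuB k k' n) ^ m)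
          atTop (𝓝 L)) := by
  have hν : ∀ n : ℕ, 1 ≤ n → 0 < nuB k k' n := by
    intro n hn
    have h1 : (1:ℝ) ≤ (n:ℝ) := by exact_mod_cast hn
    have h2 := hk' n
    unfold nuB
    nlinarith
  have hx0 : ∀ n i, 0 ≤ Λ n i ^ 2 / nuB k k' n / (n:ℝ) := by
    intro n i
    rcases Nat.eq_zero_or_pos n with rfl | hn
    · simp
    · exact div_nonneg (div_nonneg (sq_nonneg _) (hν n hn).le) (Nat.cast_nonneg n)
  have hxanti : ∀ n, Antitone (fun i => Λ n i ^ 2 / nuB k k' n / (n:ℝ)) := by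
    intro n
    apply antitone_nat_of_succ_le
    intro j
    rcases Nat.eq_zero_or_pos n with rfl | hn
    · simp
    · have hΛ : Λ n (j + 1) ≤ Λ n j := by
        rcases lt_or_ge (j + 1) n with h | h
        · exact hmono n j h
        · rw [hpad n (j + 1) h]; exact hpos n j
      have hsq : Λ n (j + 1) ^ 2 ≤ Λ n j ^ 2 := pow_le_pow_left₀ (hpos n (j + 1)) hΛ 2
      show Λ n (j + 1) ^ 2 / nuB k k' n / (n:ℝ) ≤ Λ n j ^ 2 / nuB k k' n / (n:ℝ)
      rw [div_div, div_div]
      exact div_le_div_of_nonneg_right hsq (mul_pos (hν n hn) (Nat.cast_pos.mpr hn)).le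
  have hxpad : ∀ n i, n ≤ i → Λ n i ^ 2 / nuB k k' n / (n:ℝ) = 0 := by
    intro n i h
    simp [hpad n i h]
  have H := vkB_main (fun n i => Λ n i ^ 2 / nuB k k' n / (n:ℝ)) hx0 hxanti hxpad
  have e2 : ∀ n : ℕ, (∑ i ∈ Finset.range n, (Λ n i) ^ 2 / nuB k k' n) / (n : ℝ)
      = ∑ j ∈ Finset.range n, (Λ n j ^ 2 / nuB k k' n / (n:ℝ)) ^ 1 := by
    intro n
    rw [Finset.sum_div]
    exact Finset.sum_congr rfl (fun i _ => by rw [pow_one])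
  have e3 : ∀ n : ℕ, (∑ i ∈ Finset.range n, ((Λ n i) ^ 2 / nuB k k' n) ^ 2) / (n : ℝ) ^ 2
      = ∑ j ∈ Finset.range n, (Λ n j ^ 2 / nuB k k' n / (n:ℝ)) ^ 2 := by
    intro n
    rw [Finset.sum_div]
    exact Finset.sum_congr rfl (fun i _ => by simp [div_pow])
  have e4 : ∀ (m n : ℕ), (∑ i ∈ Finset.range n, (Λ n i) ^ (2 * m)) / ((n : ℝ) * nuB k k' n) ^ m
      = ∑ j ∈ Finset.range n, (Λ n j ^ 2 / nuB k k' n / (n:ℝ)) ^ m := by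
    intro m n
    rw [Finset.sum_div]
    refine Finset.sum_congr rfl (fun i _ => ?_)
    rw [div_div, div_pow, ← pow_mul, mul_comm (nuB k k' n) ((n:ℝ))]
  constructor
  · rintro ⟨⟨α, hα⟩, ⟨β, hβ⟩, ⟨δ, hδ⟩⟩ m hm
    obtain ⟨L, hL⟩ := H.mp ⟨⟨α, hα⟩, ⟨β, hβ.congr e2⟩, ⟨δ, hδ.congr e3⟩⟩ m hm
    exact ⟨L, hL.congr (fun n => (e4 m n).symm)⟩
  · intro h
    obtain ⟨⟨α, hα⟩, ⟨β, hβ⟩, ⟨δ, hδ⟩⟩ :=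
      H.mpr (fun m hm => (h m hm).imp (fun L hL => hL.congr (e4 m)))
    exact ⟨⟨α, hα⟩, ⟨β, hβ.congr (fun n => (e2 n).symm)⟩,
      ⟨δ, hδ.congr (fun n => (e3 n).symm)⟩⟩
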